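/- arXiv:1809.10945 — 6 statements merged into one kernel-verified Lean document; each statement's English description precedes it below -/
import Mathlib

section
/- Let K be a finite abstract simplicial complex and let v, v' be two distinct vertices of K. Then v is dominated by v' if and only if every maximal simplex of K that contains v also contains v'. -/
/-- `K` is an abstract simplicial complex: every member is nonempty and every
nonempty subset of a member belongs to `K`. -/
def IsComplex {V : Type*} (K : Set (Finset V)) : Prop :=
  (∀ σ ∈ K, σ.Nonempty) ∧ ∀ σ ∈ K, ∀ τ : Finset V, τ ⊆ σ → τ.Nonempty → τ ∈ K

/-- `v` is a vertex of `K`. -/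
def IsVertex {V : Type*} (K : Set (Finset V)) (v : V) : Prop := {v} ∈ K

/-- `σ` is a maximal simplex of `K`. -/
def IsMaximalSimplex {V : Type*} (K : Set (Finset V)) (σ : Finset V) : Prop :=
  σ ∈ K ∧ ∀ τ ∈ K, σ ⊆ τ → σ = τ

/-- The link of the vertex `v` in `K`. -/
def link {V : Type*} [DecidableEq V] (K : Set (Finset V)) (v : V) : Set (Finset V) :=
  {τ | τ ∈ K ∧ v ∉ τ ∧ τ ∪ {v} ∈ K}

/-- `v` is dominated by the vertex `v' ≠ v`: the link of `v` is a cone with apex `v'`. -/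
def Dominated {V : Type*} [DecidableEq V] (K : Set (Finset V)) (v v' : V) : Prop :=
  v' ≠ v ∧ ({v'} : Finset V) ∈ link K v ∧ ∀ τ ∈ link K v, τ ∪ {v'} ∈ link K v

/-- Every simplex of a finite complex is contained in a maximal simplex. -/
lemma exists_maximal_supset {V : Type*} (K : Set (Finset V)) (hfin : K.Finite)
    {σ : Finset V} (hσ : σ ∈ K) : ∃ τ, IsMaximalSimplex K τ ∧ σ ⊆ τ := by
  have hS : ({τ ∈ K | σ ⊆ τ} : Set (Finset V)).Finite := hfin.subset (fun τ hτ => hτ.1)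
  obtain ⟨a, ⟨haK, hσa⟩, hmax⟩ := Set.Finite.exists_maximalFor id _ hS ⟨σ, hσ, subset_rfl⟩
  exact ⟨a, ⟨haK, fun τ hτ haτ => le_antisymm haτ (hmax ⟨hτ, hσa.trans haτ⟩ haτ)⟩, hσa⟩

/-- A vertex `v` is dominated by `v'` if and only if every maximal simplex of `K`
containing `v` also contains `v'`. -/
theorem dominated_iff_maximal {V : Type*} [DecidableEq V] (K : Set (Finset V))
    (hK : IsComplex K) (hfin : K.Finite) (v v' : V)
    (hv : IsVertex K v) (hv' : IsVertex K v') (hne : v ≠ v') :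
    Dominated K v v' ↔ ∀ σ : Finset V, IsMaximalSimplex K σ → v ∈ σ → v' ∈ σ := by
  constructor
  · rintro ⟨hne', hcone, hdom⟩ σ hσmax hvσ
    by_cases hτ : (σ \ {v}).Nonempty
    · have hτK : σ \ {v} ∈ K := hK.2 σ hσmax.1 _ (Finset.sdiff_subset) hτ
      have hlink : σ \ {v} ∈ link K v := by
        refine ⟨hτK, by simp, ?_⟩
        have : σ \ {v} ∪ {v} = σ := by
          ext x; simp [Finset.mem_sdiff]
          intro h; by_cases hx : x = v <;> simp [hx, hvσ, h]
        rw [this]; exact hσmax.1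
      obtain ⟨h1, h2, h3⟩ := hdom _ hlink
      have hsub : σ ⊆ (σ \ {v} ∪ {v'}) ∪ {v} := by
        intro x hx
        by_cases hxv : x = v
        · simp [hxv]
        · simp [Finset.mem_sdiff, hx, hxv]
      have := hσmax.2 _ h3 hsub
      have : v' ∈ (σ \ {v} ∪ {v'}) ∪ {v} := by simp
      rwa [← hσmax.2 _ h3 hsub] at this
    · have hσv : σ = {v} := by
        rw [Finset.not_nonempty_iff_eq_empty, Finset.sdiff_eq_empty_iff_subset] at hτ
        exact Finset.Subset.antisymm hτ (Finset.singleton_subset_iff.2 hvσ)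
      obtain ⟨h1, h2, h3⟩ := hcone
      have hsub : σ ⊆ ({v'} : Finset V) ∪ {v} := by simp [hσv]
      have := hσmax.2 _ h3 hsub
      have hmem : v' ∈ ({v'} : Finset V) ∪ {v} := by simp
      rwa [← hσmax.2 _ h3 hsub] at hmem
  · intro h
    refine ⟨hne.symm, ?_, ?_⟩
    · refine ⟨hv', by simpa using hne, ?_⟩
      obtain ⟨σ, hσmax, hσsub⟩ := exists_maximal_supset K hfin hv
      have hvσ : v ∈ σ := hσsub (by simp)
      have hv'σ : v' ∈ σ := h σ hσmax hvσ
      exact hK.2 σ hσmax.1 _ (Finset.union_subset (by simpa using hv'σ) (by simpa using hvσ))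
        ⟨v', by simp⟩
    · rintro τ ⟨hτK, hvτ, hτvK⟩
      obtain ⟨σ, hσmax, hσsub⟩ := exists_maximal_supset K hfin hτvK
      have hvσ : v ∈ σ := hσsub (by simp)
      have hv'σ : v' ∈ σ := h σ hσmax hvσ
      have hτσ : τ ⊆ σ := fun x hx => hσsub (by simp [hx])
      refine ⟨hK.2 σ hσmax.1 _ (Finset.union_subset hτσ (by simpa using hv'σ))
        ⟨v', by simp⟩, by simp [hvτ, hne], ?_⟩
      exact hK.2 σ hσmax.1 _
        (Finset.union_subset (Finset.union_subset hτσ (by simpa using hv'σ))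
          (by simpa using hvσ)) ⟨v, by simp⟩
end

section
/- Let K be an abstract simplicial complex and suppose the vertex v is dominated by the vertex v' ≠ v. Define the vertex map r by r(v) = v' and r(w) = w for all w ≠ v. Then r induces a simplicial map from K to K \ v: for every simplex σ ∈ K, the image finset r(σ) is a simplex of K \ v = {σ ∈ K | v ∉ σ}. -/
/-- The deletion `K \ v` of the vertex `v` from `K`. -/
def deletion {V : Type*} (K : Set (Finset V)) (v : V) : Set (Finset V) :=
  {σ | σ ∈ K ∧ v ∉ σ}

/-- If `v` is dominated by `v'`, the retraction map `r` sending `v` to `v'` and fixing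
every other vertex induces a simplicial map from `K` to `K \ v`. -/
theorem retraction_isSimplicial {V : Type*} [DecidableEq V] (K : Set (Finset V))
    (hK : IsComplex K) (v v' : V) (hdom : Dominated K v v') :
    ∀ σ ∈ K, σ.image (fun w => if w = v then v' else w) ∈ deletion K v := by
  obtain ⟨hne, hv'link, hcone⟩ := hdom
  intro σ hσ
  by_cases hvσ : v ∈ σ
  · by_cases hsingle : σ \ {v} = ∅
    · -- σ = {v}
      have hσeq : σ = {v} := by
        apply Finset.Subset.antisymm
        · intro x hx
          by_contra hx'
          simp only [Finset.mem_singleton] at hx'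
          have : x ∈ σ \ {v} := Finset.mem_sdiff.2 ⟨hx, by simp [hx']⟩
          simp [hsingle] at this
        · simp [hvσ]
      have himg : σ.image (fun w => if w = v then v' else w) = {v'} := by
        subst hσeq; simp
      rw [himg]
      exact ⟨hv'link.1, fun h => hne ((Finset.mem_singleton.1 h).symm)⟩
    · have hτne : (σ \ {v}).Nonempty := Finset.nonempty_of_ne_empty hsingle
      have hτsub : σ \ {v} ⊆ σ := Finset.sdiff_subset
      have hτK : σ \ {v} ∈ K := hK.2 σ hσ _ hτsub hτne
      have hτlink : σ \ {v} ∈ link K v := by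
        refine ⟨hτK, by simp, ?_⟩
        have h : σ \ {v} ∪ {v} = σ := by
          ext x; simp only [Finset.mem_union, Finset.mem_sdiff, Finset.mem_singleton]
          constructor
          · rintro (⟨h, _⟩ | rfl); exact h; exact hvσ
          · intro hx; by_cases hxv : x = v <;> simp [hxv, hx]
        rw [h]; exact hσ
      have hres := hcone _ hτlink
      have himg : σ.image (fun w => if w = v then v' else w) = (σ \ {v}) ∪ {v'} := by
        ext x
        simp only [Finset.mem_image, Finset.mem_union, Finset.mem_sdiff, Finset.mem_singleton]
        constructor
        · rintro ⟨w, hw, hwx⟩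
          by_cases hwv : w = v
          · right; simp [hwv] at hwx; exact hwx.symm
          · left; simp [hwv] at hwx; subst hwx; exact ⟨hw, hwv⟩
        · rintro (⟨hx, hxv⟩ | rfl)
          · exact ⟨x, hx, by simp [hxv]⟩
          · exact ⟨v, hvσ, by simp⟩
      rw [himg]
      refine ⟨hres.1, ?_⟩
      intro h
      rcases Finset.mem_union.1 h with h | h
      · exact (Finset.mem_sdiff.1 h).2 (Finset.mem_singleton.2 rfl)
      · exact hne (Finset.mem_singleton.1 h).symm
  · have himg : σ.image (fun w => if w = v then v' else w) = σ := by
      ext x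
      simp only [Finset.mem_image]
      constructor
      · rintro ⟨w, hw, hwx⟩
        have hwv : w ≠ v := fun h => hvσ (h ▸ hw)
        simp [hwv] at hwx
        exact hwx ▸ hw
      · intro hx
        have hxv : x ≠ v := fun h => hvσ (h ▸ hx)
        exact ⟨x, hx, by simp [hxv]⟩
    rw [himg]
    exact ⟨hσ, hvσ⟩
end

section
/- Let K be an abstract simplicial complex and suppose the vertex v is dominated by the vertex v' ≠ v. Let r be the vertex map with r(v) = v' and r(w) = w for w ≠ v. Then the composition of r with the inclusion of K \ v into K is contiguous to the identity map of K: for every simplex σ ∈ K, the finset σ ∪ r(σ) is a simplex of K. In particular, for every σ ∈ K with v ∈ σ, σ ∪ {v'} ∈ K. -/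
theorem aux_union_vp {V : Type*} [DecidableEq V] (K : Set (Finset V))
    (hK : IsComplex K) (v v' : V) (hdom : Dominated K v v') :
    ∀ σ ∈ K, v ∈ σ → σ ∪ {v'} ∈ K := by
  intro σ hσ hv
  obtain ⟨hne, ⟨hv'K, hv'v, hvv'⟩, hcone⟩ := hdom
  by_cases hτ : (σ.erase v).Nonempty
  · have hτK : σ.erase v ∈ K := hK.2 σ hσ _ (Finset.erase_subset _ _) hτ
    have hlink : σ.erase v ∈ link K v := by
      refine ⟨hτK, Finset.notMem_erase _ _, ?_⟩
      have heq : σ.erase v ∪ {v} = σ := by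
        ext x
        simp only [Finset.mem_union, Finset.mem_erase, Finset.mem_singleton]
        constructor
        · rintro (⟨_, h⟩ | rfl) <;> assumption
        · intro hx
          by_cases hxv : x = v <;> simp_all
      rwa [heq]
    have := (hcone _ hlink).2.2
    have heq : σ.erase v ∪ {v'} ∪ {v} = σ ∪ {v'} := by
      ext x
      simp only [Finset.mem_union, Finset.mem_erase, Finset.mem_singleton]
      constructor
      · rintro ((⟨_, h⟩ | h) | rfl) <;> simp_all
      · rintro (h | h)
        · by_cases hx : x = v <;> simp_all
        · simp_all
    rwa [heq] at this
  · have : σ = {v} := by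
      have := Finset.not_nonempty_iff_eq_empty.mp hτ
      ext x
      simp only [Finset.mem_singleton]
      constructor
      · intro hx
        by_contra hne'
        exact (Finset.eq_empty_iff_forall_notMem.mp this x) (Finset.mem_erase.mpr ⟨hne', hx⟩)
      · rintro rfl; exact hv
    subst this
    have := hvv'
    have heq : ({v'} : Finset V) ∪ {v} = {v} ∪ {v'} := Finset.union_comm _ _
    rwa [heq] at this

/-- If `v` is dominated by `v'` and `r` is the retraction sending `v` to `v'` and fixing
the other vertices, then (the inclusion composed with) `r` is contiguous to the identity
of `K`: for every `σ ∈ K` the finset `σ ∪ r(σ)` is a simplex of `K`.  In particular, for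
every `σ ∈ K` containing `v`, `σ ∪ {v'} ∈ K`. -/
theorem retraction_contiguous_id {V : Type*} [DecidableEq V] (K : Set (Finset V))
    (hK : IsComplex K) (v v' : V) (hdom : Dominated K v v') :
    (∀ σ ∈ K, σ ∪ σ.image (fun w => if w = v then v' else w) ∈ K) ∧
    (∀ σ ∈ K, v ∈ σ → σ ∪ {v'} ∈ K) := by
  have main := aux_union_vp K hK v v' hdom
  refine ⟨?_, main⟩
  intro σ hσ
  by_cases hv : v ∈ σ
  · have h1 : σ ∪ σ.image (fun w => if w = v then v' else w) ⊆ σ ∪ {v'} := by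
      intro x hx
      simp only [Finset.mem_union, Finset.mem_image, Finset.mem_singleton] at hx ⊢
      rcases hx with h | ⟨w, hw, hwe⟩
      · exact Or.inl h
      · by_cases hwv : w = v
        · simp [hwv] at hwe; exact Or.inr hwe.symm
        · simp [hwv] at hwe; subst hwe; exact Or.inl hw
    exact hK.2 _ (main σ hσ hv) _ h1 ⟨v, by simp [hv]⟩
  · have : σ.image (fun w => if w = v then v' else w) = σ := by
      ext x
      simp only [Finset.mem_image]
      constructor
      · rintro ⟨w, hw, hwe⟩
        have hwv : w ≠ v := fun h => hv (h ▸ hw)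
        rw [if_neg hwv] at hwe
        exact hwe ▸ hw
      · intro hx
        exact ⟨x, hx, if_neg (by rintro rfl; exact hv hx)⟩
    rw [this, Finset.union_self]
    exact hσ
end

section
/- For every finite abstract simplicial complex K there exists a full subcomplex L of K such that K strong collapses to L and L is isomorphic to N²(K). -/
/-- `K` strong collapses to `L`: `L` is obtained from `K` by a finite (possibly empty)
sequence of elementary strong collapses, i.e. deletions of dominated vertices. -/
inductive StrongCollapses {V : Type*} [DecidableEq V] :
    Set (Finset V) → Set (Finset V) → Prop
  | refl (K : Set (Finset V)) : StrongCollapses K K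
  | step (K L : Set (Finset V)) (v v' : V) (hdom : Dominated K v v')
      (h : StrongCollapses (deletion K v) L) : StrongCollapses K L

/-- The nerve of `K`: all nonempty finite sets of maximal simplices of `K`
with nonempty common intersection. -/
def nerve {V : Type*} (K : Set (Finset V)) : Set (Finset (Finset V)) :=
  {S | S.Nonempty ∧ (∀ σ ∈ S, IsMaximalSimplex K σ) ∧ ∃ x : V, ∀ σ ∈ S, x ∈ σ}

/-- `K` and `L` are isomorphic simplicial complexes: some vertex bijection `φ`
identifies the simplices of `K` with those of `L`. -/
def Isomorphic {V W : Type*} [DecidableEq W]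
    (K : Set (Finset V)) (L : Set (Finset W)) : Prop :=
  ∃ φ : V → W, Set.BijOn φ {v | IsVertex K v} {w | IsVertex L w} ∧
    ∀ σ : Finset V, (∀ v ∈ σ, IsVertex K v) → (σ ∈ K ↔ σ.image φ ∈ L)

/-! ### Auxiliary lemmas -/

set_option linter.unusedSectionVars false

section Aux
variable {V : Type*} [DecidableEq V]

/-- In a finite complex, every simplex is contained in a maximal simplex. -/
lemma exists_maximal_containing {K : Set (Finset V)} (hfin : K.Finite) {σ : Finset V}
    (hσ : σ ∈ K) : ∃ τ, IsMaximalSimplex K τ ∧ σ ⊆ τ := by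
  obtain ⟨τ, hτ, hmax⟩ := Set.Finite.exists_maximalFor Finset.card {τ ∈ K | σ ⊆ τ}
    (hfin.subset (fun _ h => h.1)) ⟨σ, hσ, subset_rfl⟩
  refine ⟨τ, ⟨hτ.1, fun ρ hρ hsub => ?_⟩, hτ.2⟩
  exact Finset.eq_of_subset_of_card_le hsub
    (hmax (show ρ ∈ {τ ∈ K | σ ⊆ τ} from ⟨hρ, hτ.2.trans hsub⟩) (Finset.card_le_card hsub))

lemma nerve_finite {K : Set (Finset V)} (hfin : K.Finite) : (nerve K).Finite := by
  apply Set.Finite.subset (hfin.toFinset.powerset : Finset _).finite_toSet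
  intro S hS
  simp only [Finset.mem_coe, Finset.mem_powerset]
  intro σ hσ
  exact hfin.mem_toFinset.2 (hS.2.1 σ hσ).1

/-- `u` is dominated by `w` as soon as every maximal simplex containing `u` contains `w`. -/
lemma dominated_of_forall {K : Set (Finset V)} (hK : IsComplex K) (hfin : K.Finite)
    {u w : V} (hu : IsVertex K u) (hne : w ≠ u)
    (h : ∀ σ, IsMaximalSimplex K σ → u ∈ σ → w ∈ σ) : Dominated K u w := by
  obtain ⟨τ, hτ, hsub⟩ := exists_maximal_containing hfin hu
  have huτ : u ∈ τ := hsub (Finset.mem_singleton_self u)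
  have hwτ : w ∈ τ := h τ hτ huτ
  refine ⟨hne, ⟨?_, ?_, ?_⟩, ?_⟩
  · exact hK.2 τ hτ.1 {w} (Finset.singleton_subset_iff.2 hwτ) ⟨w, Finset.mem_singleton_self w⟩
  · simp only [Finset.mem_singleton]; exact fun e => hne e.symm
  · refine hK.2 τ hτ.1 _ ?_ ⟨w, by simp⟩
    intro x hx
    rcases Finset.mem_union.1 hx with hx | hx
    · exact (Finset.mem_singleton.1 hx) ▸ hwτ
    · exact (Finset.mem_singleton.1 hx) ▸ huτ
  · rintro ρ ⟨hρK, huρ, hρuK⟩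
    obtain ⟨τ', hτ', hsub'⟩ := exists_maximal_containing hfin hρuK
    have hwτ' : w ∈ τ' := h τ' hτ' (hsub' (by simp))
    have hρτ' : ρ ⊆ τ' := fun x hx => hsub' (Finset.mem_union_left _ hx)
    have h1 : ρ ∪ {w} ⊆ τ' := Finset.union_subset hρτ' (by simpa using hwτ')
    refine ⟨hK.2 τ' hτ'.1 _ h1 ⟨w, by simp⟩, ?_, ?_⟩
    · intro hmem
      rcases Finset.mem_union.1 hmem with hx | hx
      · exact huρ hx
      · exact hne (Finset.mem_singleton.1 hx).symm
    · refine hK.2 τ' hτ'.1 _ ?_ ⟨w, by simp⟩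
      refine Finset.union_subset h1 ?_
      simpa using hsub' (Finset.mem_union_right _ (Finset.mem_singleton_self u))

lemma isComplex_deletion {K : Set (Finset V)} (hK : IsComplex K) (v : V) :
    IsComplex (deletion K v) :=
  ⟨fun σ h => hK.1 σ h.1, fun σ h τ hsub hne =>
    ⟨hK.2 σ h.1 τ hsub hne, fun hv => h.2 (hsub hv)⟩⟩

lemma vertices_finite {K : Set (Finset V)} (hfin : K.Finite) :
    {v | IsVertex K v}.Finite := by
  have : {v | IsVertex K v} = (fun v => ({v} : Finset V)) ⁻¹' K := rfl
  rw [this]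
  exact Set.Finite.preimage (Set.injOn_of_injective (fun a b => by simp)) hfin

/-- The key collapsing lemma: if every vertex is "covered" by a vertex of `W`
(every maximal simplex containing it contains the covering vertex), then `K`
strong collapses to the full subcomplex on `W`. -/
lemma collapses_to_full :
    ∀ (n : ℕ) (K : Set (Finset V)) (W : Set V), IsComplex K → K.Finite →
    ({v | IsVertex K v} \ W).ncard ≤ n →
    (∀ u, IsVertex K u → ∃ w ∈ W, ∀ σ, IsMaximalSimplex K σ → u ∈ σ → w ∈ σ) →
    StrongCollapses K {σ | σ ∈ K ∧ ↑σ ⊆ W} := by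
  intro n
  induction n with
  | zero =>
    intro K W hK hfin hcard hP
    have hempty : {v | IsVertex K v} \ W = ∅ := by
      rw [← Set.ncard_eq_zero ((vertices_finite hfin).diff)]
      omega
    have : {σ | σ ∈ K ∧ ↑σ ⊆ W} = K := by
      ext σ
      refine ⟨fun h => h.1, fun h => ⟨h, fun v hv => ?_⟩⟩
      have hv' : IsVertex K v := hK.2 σ h {v} (Finset.singleton_subset_iff.2 hv) ⟨v, by simp⟩
      by_contra hvW
      exact absurd (Set.eq_empty_iff_forall_notMem.1 hempty v) (fun h2 => h2 ⟨hv', hvW⟩)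
    rw [this]; exact StrongCollapses.refl K
  | succ n ih =>
    intro K W hK hfin hcard hP
    by_cases hex : ∃ u, IsVertex K u ∧ u ∉ W
    · obtain ⟨u, hu, huW⟩ := hex
      obtain ⟨w, hwW, hdom⟩ := hP u hu
      have hne : w ≠ u := fun e => huW (e ▸ hwW)
      refine StrongCollapses.step K _ u w (dominated_of_forall hK hfin hu hne hdom) ?_
      have hLeq : {σ | σ ∈ K ∧ ↑σ ⊆ W} = {σ | σ ∈ deletion K u ∧ ↑σ ⊆ W} := by
        ext σ
        constructor
        · rintro ⟨h1, h2⟩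
          exact ⟨⟨h1, fun hus => huW (h2 hus)⟩, h2⟩
        · rintro ⟨h1, h2⟩; exact ⟨h1.1, h2⟩
      rw [hLeq]
      have hKd : IsComplex (deletion K u) := isComplex_deletion hK u
      have hfind : (deletion K u).Finite := hfin.subset (fun _ h => h.1)
      apply ih (deletion K u) W hKd hfind
      · -- the number of vertices outside `W` decreases
        have hset : {v | IsVertex (deletion K u) v} \ W
            = ({v | IsVertex K v} \ W) \ {u} := by
          ext v
          simp only [Set.mem_diff, Set.mem_setOf_eq, Set.mem_singleton_iff]
          constructor
          · rintro ⟨⟨h1, h2⟩, h3⟩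
            exact ⟨⟨h1, h3⟩, fun e => h2 (by simp [e])⟩
          · rintro ⟨⟨h1, h2⟩, h3⟩
            exact ⟨⟨h1, by simp [Ne.symm h3, eq_comm]⟩, h2⟩
        rw [hset]
        have hmem : u ∈ {v | IsVertex K v} \ W := ⟨hu, huW⟩
        have := Set.ncard_diff_singleton_lt_of_mem hmem ((vertices_finite hfin).diff)
        omega
      · -- the covering property persists after the deletion
        intro u' hu'
        have hu'K : IsVertex K u' := hu'.1
        have hu'ne : u' ≠ u := fun e => hu'.2 (by simp [e])
        obtain ⟨w', hw'W, hw'⟩ := hP u' hu'K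
        have hw'ne : w' ≠ u := fun e => huW (e ▸ hw'W)
        refine ⟨w', hw'W, ?_⟩
        intro σ' hσ' hu'σ'
        obtain ⟨τ, hτ, hsub⟩ := exists_maximal_containing hfin hσ'.1.1
        by_cases huτ : u ∈ τ
        · have hσ'eq : σ' = τ.erase u := by
            refine hσ'.2 _ ⟨hK.2 τ hτ.1 _ (Finset.erase_subset u τ)
              ⟨u', Finset.mem_erase.2 ⟨hu'ne, hsub hu'σ'⟩⟩, Finset.notMem_erase u τ⟩
              (fun x hx => Finset.mem_erase.2 ⟨fun e => hσ'.1.2 (e ▸ hx), hsub hx⟩)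
          rw [hσ'eq]
          exact Finset.mem_erase.2 ⟨hw'ne, hw' τ hτ (hsub hu'σ')⟩
        · have : σ' = τ := hσ'.2 τ ⟨hτ.1, huτ⟩ hsub
          rw [this]
          exact hw' τ hτ (hsub hu'σ')
    · push_neg at hex
      have : {σ | σ ∈ K ∧ ↑σ ⊆ W} = K := by
        ext σ
        refine ⟨fun h => h.1, fun h => ⟨h, fun v hv => ?_⟩⟩
        exact hex v (hK.2 σ h {v} (Finset.singleton_subset_iff.2 hv) ⟨v, by simp⟩)
      rw [this]; exact StrongCollapses.refl K

/-- The star of a vertex: the set of maximal simplices containing it. -/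
def stSet (K : Set (Finset V)) (v : V) : Set (Finset V) :=
  {σ | IsMaximalSimplex K σ ∧ v ∈ σ}

/-- The star of a vertex, as a finset. -/
noncomputable def stF (K : Set (Finset V)) (hfin : K.Finite) (v : V) : Finset (Finset V) :=
  (hfin.subset (fun _ h => h.1.1) : (stSet K v).Finite).toFinset

lemma mem_stF {K : Set (Finset V)} {hfin : K.Finite} {v : V} {σ : Finset V} :
    σ ∈ stF K hfin v ↔ IsMaximalSimplex K σ ∧ v ∈ σ := by
  simp [stF, stSet]

/-- If `S` is a maximal simplex of the nerve and `x` lies in every member of `S`,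
then `S` is exactly the star of `x`. -/
lemma stF_eq_of_maximal {K : Set (Finset V)} (hfin : K.Finite)
    {S : Finset (Finset V)} (hS : IsMaximalSimplex (nerve K) S)
    {x : V} (hx : ∀ σ ∈ S, x ∈ σ) : stF K hfin x = S := by
  obtain ⟨hne, hmaxs, -⟩ := hS.1
  have hsub : S ⊆ stF K hfin x := fun σ hσ => mem_stF.2 ⟨hmaxs σ hσ, hx σ hσ⟩
  have hmem : stF K hfin x ∈ nerve K :=
    ⟨hne.mono hsub, fun σ hσ => (mem_stF.1 hσ).1, x, fun σ hσ => (mem_stF.1 hσ).2⟩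
  exact (hS.2 _ hmem hsub).symm

/-- The vertices of `N²(K)` are exactly the maximal simplices of `N(K)`. -/
lemma isVertex_nerve_sq {K : Set (Finset V)} {S : Finset (Finset V)} :
    IsVertex (nerve (nerve K)) S ↔ IsMaximalSimplex (nerve K) S := by
  constructor
  · rintro ⟨-, hmax, -⟩
    exact hmax S (Finset.mem_singleton_self S)
  · intro hS
    exact ⟨⟨S, Finset.mem_singleton_self S⟩,
      fun T hT => (Finset.mem_singleton.1 hT) ▸ hS,
      (hS.1.1.choose), fun T hT => (Finset.mem_singleton.1 hT) ▸ hS.1.1.choose_spec⟩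

end Aux

/-- Every finite simplicial complex `K` strong collapses to a full subcomplex `L`
isomorphic to `N²(K)`. -/
theorem strongCollapse_to_nerve_sq {V : Type*} [DecidableEq V]
    (K : Set (Finset V)) (hK : IsComplex K) (hfin : K.Finite) :
    ∃ L : Set (Finset V), L ⊆ K ∧
      (∀ σ ∈ K, (∀ v ∈ σ, IsVertex L v) → σ ∈ L) ∧
      StrongCollapses K L ∧ Isomorphic L (nerve (nerve K)) := by
  classical
  -- `W` is the set of chosen witnesses, one inside each maximal simplex of the nerve
  set W : Set V := {x | ∃ S : Finset (Finset V), IsMaximalSimplex (nerve K) S ∧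
      ∃ h : ∃ y : V, ∀ σ ∈ S, y ∈ σ, x = h.choose} with hWdef
  have hWst : ∀ x ∈ W, IsMaximalSimplex (nerve K) (stF K hfin x) := by
    rintro x ⟨S, hSm, h, rfl⟩
    rw [stF_eq_of_maximal hfin hSm h.choose_spec]
    exact hSm
  have hWvert : ∀ x ∈ W, IsVertex K x := by
    rintro x ⟨S, hSm, h, rfl⟩
    obtain ⟨σ, hσS⟩ := hSm.1.1
    have hσK : σ ∈ K := (hSm.1.2.1 σ hσS).1
    exact hK.2 σ hσK {Exists.choose h}
      (Finset.singleton_subset_iff.2 (h.choose_spec σ hσS)) ⟨_, Finset.mem_singleton_self _⟩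
  -- every vertex is covered by a witness
  have hP : ∀ u, IsVertex K u → ∃ w ∈ W, ∀ σ, IsMaximalSimplex K σ → u ∈ σ → w ∈ σ := by
    intro u hu
    have hstu : stF K hfin u ∈ nerve K := by
      obtain ⟨τ, hτ, hsub⟩ := exists_maximal_containing hfin hu
      exact ⟨⟨τ, mem_stF.2 ⟨hτ, hsub (Finset.mem_singleton_self u)⟩⟩,
        fun σ hσ => (mem_stF.1 hσ).1, u, fun σ hσ => (mem_stF.1 hσ).2⟩
    obtain ⟨S, hSmax, hsub⟩ := exists_maximal_containing (nerve_finite hfin) hstu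
    have hx : ∃ y : V, ∀ σ ∈ S, y ∈ σ := hSmax.1.2.2
    refine ⟨hx.choose, ⟨S, hSmax, hx, rfl⟩, ?_⟩
    intro σ hσ huσ
    exact hx.choose_spec σ (hsub (mem_stF.2 ⟨hσ, huσ⟩))
  refine ⟨{σ | σ ∈ K ∧ ↑σ ⊆ W}, fun σ h => h.1, ?_, ?_, ?_⟩
  · -- full subcomplex
    intro σ hσ hv
    exact ⟨hσ, fun v hvσ => (hv v hvσ).2 (Finset.mem_coe.2 (Finset.mem_singleton_self v))⟩
  · -- strong collapse
    exact collapses_to_full _ K W hK hfin le_rfl hP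
  · -- isomorphism with N²(K) via `v ↦ stF v`
    have hvertL : ∀ v, IsVertex {σ | σ ∈ K ∧ ↑σ ⊆ W} v ↔ v ∈ W := by
      intro v
      constructor
      · intro h
        exact h.2 (Finset.mem_coe.2 (Finset.mem_singleton_self v))
      · intro h
        exact ⟨hWvert v h, by simpa using h⟩
    refine ⟨stF K hfin, ?_, ?_⟩
    · have h1 : {v | IsVertex {σ | σ ∈ K ∧ ↑σ ⊆ W} v} = W := Set.ext hvertL
      have h2 : {S | IsVertex (nerve (nerve K)) S}
          = {S | IsMaximalSimplex (nerve K) S} := Set.ext fun S => isVertex_nerve_sq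
      rw [h1, h2]
      refine ⟨fun x hx => hWst x hx, ?_, ?_⟩
      · -- injective on `W`
        rintro x ⟨S, hSm, h, rfl⟩ x' ⟨S', hSm', h', rfl⟩ heq
        have e1 : stF K hfin h.choose = S := stF_eq_of_maximal hfin hSm h.choose_spec
        have e2 : stF K hfin h'.choose = S' := stF_eq_of_maximal hfin hSm' h'.choose_spec
        have : S = S' := e1 ▸ e2 ▸ heq
        subst this
        exact congrArg Exists.choose (Subsingleton.elim h h')
      · -- surjective onto the maximal simplices of the nerve
        intro S hS
        have hx : ∃ y : V, ∀ σ ∈ S, y ∈ σ := hS.1.2.2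
        exact ⟨hx.choose, ⟨S, hS, hx, rfl⟩, stF_eq_of_maximal hfin hS hx.choose_spec⟩
    · intro σ hσvert
      have hσW : ∀ v ∈ σ, v ∈ W := fun v hv => (hvertL v).1 (hσvert v hv)
      constructor
      · rintro ⟨hσK, -⟩
        obtain ⟨τ, hτ, hsub⟩ := exists_maximal_containing hfin hσK
        refine ⟨(hK.1 σ hσK).image _, ?_, τ, ?_⟩
        · intro T hT
          obtain ⟨v, hv, rfl⟩ := Finset.mem_image.1 hT
          exact hWst v (hσW v hv)
        · intro T hT
          obtain ⟨v, hv, rfl⟩ := Finset.mem_image.1 hT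
          exact mem_stF.2 ⟨hτ, hsub hv⟩
      · rintro ⟨hne, -, τ, hτ⟩
        have hσne : σ.Nonempty := Finset.image_nonempty.1 hne
        have hmem : ∀ v ∈ σ, IsMaximalSimplex K τ ∧ v ∈ τ := fun v hv =>
          mem_stF.1 (hτ _ (Finset.mem_image_of_mem _ hv))
        obtain ⟨v0, hv0⟩ := id hσne
        exact ⟨hK.2 τ (hmem v0 hv0).1.1 σ (fun v hv => (hmem v hv).2) hσne,
          fun v hv => hσW v hv⟩
end

section
/- A finite abstract simplicial complex K is minimal (i.e., no vertex of K is dominated by another vertex of K) if and only if K is isomorphic to N²(K). -/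
/-- `K` is minimal: no vertex of `K` is dominated by another vertex. -/
def MinimalComplex {V : Type*} [DecidableEq V] (K : Set (Finset V)) : Prop :=
  ∀ v v' : V, ¬ Dominated K v v'

section Aux
variable {V : Type*} [DecidableEq V] {K : Set (Finset V)}

/-- The finset of all maximal simplices of `K` containing `x`. -/
noncomputable def SigF (K : Set (Finset V)) (hfin : K.Finite) (x : V) : Finset (Finset V) :=
  (hfin.subset (fun _ hσ => hσ.1.1) : Set.Finite {σ | IsMaximalSimplex K σ ∧ x ∈ σ}).toFinset

lemma mem_SigF {hfin : K.Finite} {x : V} {σ : Finset V} :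
    σ ∈ SigF K hfin x ↔ IsMaximalSimplex K σ ∧ x ∈ σ := Set.Finite.mem_toFinset _

lemma exists_max (hfin : K.Finite) {σ : Finset V} (hσ : σ ∈ K) :
    ∃ ρ, IsMaximalSimplex K ρ ∧ σ ⊆ ρ := by
  obtain ⟨ρ, ⟨hρK, hσρ⟩, hmax⟩ := Set.Finite.exists_maximalFor id {τ ∈ K | σ ⊆ τ}
    (hfin.subset (fun τ hτ => hτ.1)) ⟨σ, hσ, subset_rfl⟩
  exact ⟨ρ, ⟨hρK, fun τ hτ hsub => Finset.Subset.antisymm hsub (hmax ⟨hτ, hσρ.trans hsub⟩ hsub)⟩, hσρ⟩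

lemma dominated_iff (hK : IsComplex K) (hfin : K.Finite) {v v' : V} :
    Dominated K v v' ↔ v' ≠ v ∧ IsVertex K v ∧
      ∀ σ, IsMaximalSimplex K σ → v ∈ σ → v' ∈ σ := by
  constructor
  · rintro ⟨hne, ⟨hv'K, hvv', hvv'K⟩, hcone⟩
    refine ⟨hne, hK.2 _ hvv'K {v} (by simp) ⟨v, by simp⟩, ?_⟩
    intro σ hσ hvσ
    by_cases hτ : (σ.erase v).Nonempty
    · have hτK : σ.erase v ∈ link K v := by
        refine ⟨hK.2 _ hσ.1 _ (Finset.erase_subset _ _) hτ, Finset.notMem_erase _ _, ?_⟩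
        rw [Finset.union_comm, ← Finset.insert_eq, Finset.insert_erase hvσ]; exact hσ.1
      obtain ⟨h1, h2, h3⟩ := hcone _ hτK
      have hss : σ ⊆ σ.erase v ∪ {v'} ∪ {v} := by
        intro y hy
        rcases eq_or_ne y v with rfl | hyv
        · simp
        · simp [Finset.mem_union, Finset.mem_erase, hyv, hy]
      have := hσ.2 _ h3 hss
      rw [this]; simp
    · have hσv : σ = {v} := by
        rw [Finset.not_nonempty_iff_eq_empty] at hτ
        apply Finset.eq_singleton_iff_unique_mem.2 ⟨hvσ, fun y hy => ?_⟩
        by_contra hyv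
        exact (Finset.notMem_empty y) (hτ ▸ Finset.mem_erase.2 ⟨hyv, hy⟩)
      have hss : σ ⊆ {v'} ∪ {v} := by rw [hσv]; intro y hy; simp at hy; simp [hy]
      have := hσ.2 _ hvv'K hss
      rw [this]; simp
  · rintro ⟨hne, hv, hsub⟩
    obtain ⟨ρ, hρ, hvρ⟩ := exists_max hfin hv
    have hvρ' : v ∈ ρ := hvρ (by simp)
    have hv'ρ := hsub ρ hρ hvρ'
    have key : ∀ τ ∈ link K v, τ ∪ {v'} ∈ link K v := by
      rintro τ ⟨hτK, hvτ, hτvK⟩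
      obtain ⟨ρ', hρ', hτvρ'⟩ := exists_max hfin hτvK
      have hvr : v ∈ ρ' := hτvρ' (by simp)
      have hv'r := hsub ρ' hρ' hvr
      have hτρ' : τ ⊆ ρ' := fun y hy => hτvρ' (by simp [hy])
      have h1 : τ ∪ {v'} ⊆ ρ' := by
        intro y hy; rw [Finset.mem_union, Finset.mem_singleton] at hy
        rcases hy with hy | rfl
        exacts [hτρ' hy, hv'r]
      have h2 : τ ∪ {v'} ∪ {v} ⊆ ρ' := by
        intro y hy
        rw [Finset.mem_union, Finset.mem_union, Finset.mem_singleton, Finset.mem_singleton] at hy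
        rcases hy with (hy | rfl) | rfl
        exacts [hτρ' hy, hv'r, hvr]
      refine ⟨hK.2 _ hρ'.1 _ h1 ⟨v', by simp⟩, by simp [hvτ, Ne.symm hne], ?_⟩
      exact hK.2 _ hρ'.1 _ h2 ⟨v, by simp⟩
    refine ⟨hne, ⟨hK.2 _ hρ.1 _ (Finset.singleton_subset_iff.2 hv'ρ) ⟨v', by simp⟩,
      Finset.notMem_singleton.2 (Ne.symm hne), ?_⟩, key⟩
    have : ({v'} : Finset V) ∪ {v} ⊆ ρ := by
      intro y hy; rw [Finset.mem_union, Finset.mem_singleton, Finset.mem_singleton] at hy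
      rcases hy with rfl | rfl
      exacts [hv'ρ, hvρ']
    exact hK.2 _ hρ.1 _ this ⟨v', by simp⟩
end Aux

section Aux2
variable {V : Type*} [DecidableEq V] {K : Set (Finset V)}

lemma SigF_mem_nerve (hfin : K.Finite) {x : V} (hx : IsVertex K x) :
    SigF K hfin x ∈ nerve K := by
  obtain ⟨ρ, hρ, hxρ⟩ := exists_max hfin hx
  exact ⟨⟨ρ, mem_SigF.2 ⟨hρ, hxρ (by simp)⟩⟩, fun σ hσ => (mem_SigF.1 hσ).1,
    x, fun σ hσ => (mem_SigF.1 hσ).2⟩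

lemma max_nerve_eq_SigF (hK : IsComplex K) (hfin : K.Finite) {T : Finset (Finset V)}
    (hT : IsMaximalSimplex (nerve K) T) :
    ∃ x, IsVertex K x ∧ T = SigF K hfin x := by
  obtain ⟨⟨hTne, hTmax, x, hx⟩, hTm⟩ := hT
  have hsub : T ⊆ SigF K hfin x := fun σ hσ => mem_SigF.2 ⟨hTmax σ hσ, hx σ hσ⟩
  obtain ⟨σ0, hσ0⟩ := hTne
  have hxv : IsVertex K x := hK.2 σ0 (hTmax σ0 hσ0).1 {x}
    (Finset.singleton_subset_iff.2 (hx σ0 hσ0)) ⟨x, by simp⟩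
  exact ⟨x, hxv, hTm _ (SigF_mem_nerve hfin hxv) hsub⟩

lemma vertex_nerve2_iff {w : Finset (Finset V)} :
    IsVertex (nerve (nerve K)) w ↔ IsMaximalSimplex (nerve K) w := by
  constructor
  · rintro ⟨hne, hmax, x, hx⟩
    exact hmax w (by simp)
  · intro hw
    exact ⟨⟨w, by simp⟩, fun S hS => by rw [Finset.mem_singleton] at hS; rwa [hS],
      hw.1.1.choose, fun S hS => by rw [Finset.mem_singleton] at hS; rw [hS]; exact hw.1.1.choose_spec⟩

lemma minimal_iff' (hK : IsComplex K) (hfin : K.Finite) :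
    MinimalComplex K ↔ ∀ v v' : V, IsVertex K v →
      (∀ σ, IsMaximalSimplex K σ → v ∈ σ → v' ∈ σ) → v' = v := by
  constructor
  · intro hmin v v' hv hsub
    by_contra hne
    exact hmin v v' ((dominated_iff hK hfin).2 ⟨hne, hv, hsub⟩)
  · intro H v v' hd
    obtain ⟨hne, hv, hsub⟩ := (dominated_iff hK hfin).1 hd
    exact hne (H v v' hv hsub)

end Aux2

/-- A finite simplicial complex is minimal iff it is isomorphic to `N²(K)`. -/
theorem minimal_iff_iso_nerve_sq {V : Type*} [DecidableEq V]
    (K : Set (Finset V)) (hK : IsComplex K) (hfin : K.Finite) :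
    MinimalComplex K ↔ Isomorphic K (nerve (nerve K)) := by
  classical
  constructor
  · -- minimal → isomorphic
    intro hmin
    have hmin' := (minimal_iff' hK hfin).1 hmin
    -- each SigF v is a maximal simplex of the nerve
    have hmaxSig : ∀ v : V, IsVertex K v → IsMaximalSimplex (nerve K) (SigF K hfin v) := by
      intro v hv
      refine ⟨SigF_mem_nerve hfin hv, ?_⟩
      rintro T ⟨hTne, hTmax, y, hy⟩ hsub
      have hTsub : T ⊆ SigF K hfin y := fun σ hσ => mem_SigF.2 ⟨hTmax σ hσ, hy σ hσ⟩
      obtain ⟨σ0, hσ0⟩ := hTne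
      have hyv : IsVertex K y := hK.2 σ0 (hTmax σ0 hσ0).1 {y}
        (Finset.singleton_subset_iff.2 (hy σ0 hσ0)) ⟨y, by simp⟩
      have hvy : y = v := by
        apply hmin' v y hv
        intro σ hσ hvσ
        exact (mem_SigF.1 (hTsub (hsub (mem_SigF.2 ⟨hσ, hvσ⟩)))).2
      subst hvy
      exact Finset.Subset.antisymm hsub hTsub
    refine ⟨SigF K hfin, ⟨?_, ?_, ?_⟩, ?_⟩
    · intro v hv
      exact vertex_nerve2_iff.2 (hmaxSig v hv)
    · intro v hv v' hv' heq
      symm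
      apply hmin' v v' hv
      intro σ hσ hvσ
      exact (mem_SigF.1 (heq ▸ mem_SigF.2 ⟨hσ, hvσ⟩)).2
    · intro w hw
      obtain ⟨x, hx, hwx⟩ := max_nerve_eq_SigF hK hfin (vertex_nerve2_iff.1 hw)
      exact ⟨x, hx, hwx.symm⟩
    · intro σ hvert
      constructor
      · intro hσ
        obtain ⟨ρ, hρ, hσρ⟩ := exists_max hfin hσ
        refine ⟨(hK.1 σ hσ).image _, ?_, ρ, ?_⟩
        · intro S hS
          obtain ⟨v, hv, rfl⟩ := Finset.mem_image.1 hS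
          exact hmaxSig v (hvert v hv)
        · intro S hS
          obtain ⟨v, hv, rfl⟩ := Finset.mem_image.1 hS
          exact mem_SigF.2 ⟨hρ, hσρ hv⟩
      · rintro ⟨hne, hmax, ρ, hρ⟩
        have hσne : σ.Nonempty := by
          obtain ⟨S, hS⟩ := hne
          obtain ⟨v, hv, _⟩ := Finset.mem_image.1 hS
          exact ⟨v, hv⟩
        obtain ⟨v0, hv0⟩ := hσne
        have hρm : IsMaximalSimplex K ρ ∧ v0 ∈ ρ :=
          mem_SigF.1 (hρ _ (Finset.mem_image_of_mem _ hv0))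
        have hσρ : σ ⊆ ρ := by
          intro v hv
          exact (mem_SigF.1 (hρ _ (Finset.mem_image_of_mem _ hv))).2
        exact hK.2 ρ hρm.1.1 σ hσρ ⟨v0, hv0⟩
  · -- isomorphic → minimal
    rintro ⟨φ, hbij, -⟩ v v' hd
    have hv'K : IsVertex K v' := hd.2.1.1
    obtain ⟨hne, hv, hsub⟩ := (dominated_iff hK hfin).1 hd
    set A : Set V := {x | IsVertex K x} with hA
    set B : Set (Finset (Finset V)) := {w | IsVertex (nerve (nerve K)) w} with hB
    have hAfin : A.Finite :=
      Set.Finite.preimage (Finset.singleton_injective.injOn) hfin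
    have hexists : ∀ w ∈ B, ∃ x, IsVertex K x ∧ x ≠ v ∧ w = SigF K hfin x := by
      intro w hw
      have hwmax : IsMaximalSimplex (nerve K) w := vertex_nerve2_iff.1 hw
      obtain ⟨x, hx, hwx⟩ := max_nerve_eq_SigF hK hfin hwmax
      rcases eq_or_ne x v with rfl | hxv
      · -- w = SigF v; but SigF v ⊆ SigF v' and w maximal, so w = SigF v'
        have hss : SigF K hfin x ⊆ SigF K hfin v' := by
          intro σ hσ
          obtain ⟨hσm, hxσ⟩ := mem_SigF.1 hσ
          exact mem_SigF.2 ⟨hσm, hsub σ hσm hxσ⟩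
        have : w = SigF K hfin v' :=
          hwmax.2 _ (SigF_mem_nerve hfin hv'K) (hwx ▸ hss)
        exact ⟨v', hv'K, hne, this⟩
      · exact ⟨x, hx, hxv, hwx⟩
    set f : Finset (Finset V) → V := fun w =>
      if h : ∃ x, IsVertex K x ∧ x ≠ v ∧ w = SigF K hfin x then h.choose else v with hf
    have hfspec : ∀ w ∈ B, IsVertex K (f w) ∧ f w ≠ v ∧ w = SigF K hfin (f w) := by
      intro w hw
      have h := hexists w hw
      simp only [hf, dif_pos h]
      exact h.choose_spec
    have hmaps : ∀ w ∈ B, f w ∈ A \ {v} := by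
      intro w hw
      obtain ⟨h1, h2, _⟩ := hfspec w hw
      exact ⟨h1, h2⟩
    have hinj : Set.InjOn f B := by
      intro w hw w' hw' heq
      rw [(hfspec w hw).2.2, (hfspec w' hw').2.2, heq]
    have h1 : B.ncard ≤ (A \ {v}).ncard :=
      Set.ncard_le_ncard_of_injOn f hmaps hinj (hAfin.subset Set.diff_subset)
    have h2 : (A \ {v}).ncard < A.ncard :=
      Set.ncard_diff_singleton_lt_of_mem hv hAfin
    have h3 : A.ncard = B.ncard := by
      rw [← hbij.image_eq, Set.ncard_image_of_injOn hbij.injOn]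
    omega
end

section
/- For every finite abstract simplicial complex K, the number of simplices of N²(K) is at most the number of simplices of K; moreover, if K is not minimal (i.e., some vertex of K is dominated by another vertex), then the number of simplices of N²(K) is strictly smaller than the number of simplices of K. -/
open Classical in
/-- The finset of maximal simplices of `K` containing `x`. -/
noncomputable def maxAt {V : Type*} (K : Set (Finset V)) (hfin : K.Finite) (x : V) :
    Finset (Finset V) :=
  hfin.toFinset.filter (fun σ => IsMaximalSimplex K σ ∧ x ∈ σ)

lemma mem_maxAt {V : Type*} {K : Set (Finset V)} {hfin : K.Finite} {x : V}
    {σ : Finset V} : σ ∈ maxAt K hfin x ↔ IsMaximalSimplex K σ ∧ x ∈ σ := by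
  classical
  simp only [maxAt, Finset.mem_filter, Set.Finite.mem_toFinset]
  exact ⟨fun h => h.2, fun h => ⟨h.1.1, h⟩⟩

lemma exists_maximal_ext {V : Type*} {K : Set (Finset V)} (hfin : K.Finite)
    {σ : Finset V} (hσ : σ ∈ K) : ∃ τ, IsMaximalSimplex K τ ∧ σ ⊆ τ := by
  obtain ⟨a, ⟨haK, hsa⟩, hmax⟩ := Set.Finite.exists_maximalFor Finset.card
    {τ | τ ∈ K ∧ σ ⊆ τ} (hfin.subset (fun τ hτ => hτ.1)) ⟨σ, hσ, subset_rfl⟩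
  refine ⟨a, ⟨haK, fun τ hτ hab => ?_⟩, hsa⟩
  have := hmax (j := τ) ⟨hτ, hsa.trans hab⟩ (Finset.card_le_card hab)
  exact Finset.eq_of_subset_of_card_le hab this

lemma max_nerve_eq {V : Type*} {K : Set (Finset V)} {hfin : K.Finite}
    {T : Finset (Finset V)} (hT : IsMaximalSimplex (nerve K) T) {x : V}
    (hsub : T ⊆ maxAt K hfin x) : T = maxAt K hfin x := by
  apply hT.2 _ ?_ hsub
  obtain ⟨σ, hσ⟩ := hT.1.1
  exact ⟨⟨σ, hsub hσ⟩, fun τ hτ => (mem_maxAt.mp hτ).1, ⟨x, fun τ hτ => (mem_maxAt.mp hτ).2⟩⟩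

lemma max_nerve_rep {V : Type*} {K : Set (Finset V)} (hfin : K.Finite)
    {T : Finset (Finset V)} (hT : IsMaximalSimplex (nerve K) T) :
    ∃ x, T = maxAt K hfin x := by
  obtain ⟨hne, hmaxσ, x, hx⟩ := hT.1
  exact ⟨x, max_nerve_eq hT (fun σ hσ => mem_maxAt.mpr ⟨hmaxσ σ hσ, hx σ hσ⟩)⟩

lemma inj_lemma {V : Type*} [DecidableEq V] (K : Set (Finset V)) (hK : IsComplex K)
    (hfin : K.Finite) (c : Finset (Finset V) → V)
    (hc : ∀ T, IsMaximalSimplex (nerve K) T → T = maxAt K hfin (c T)) :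
    Set.InjOn (fun 𝒮 : Finset (Finset (Finset V)) => 𝒮.image c) (nerve (nerve K)) ∧
    (fun 𝒮 : Finset (Finset (Finset V)) => 𝒮.image c) '' (nerve (nerve K)) ⊆ K := by
  constructor
  · have key : ∀ A B : Finset (Finset (Finset V)), A ∈ nerve (nerve K) → B ∈ nerve (nerve K) →
        A.image c = B.image c → ∀ T ∈ A, T ∈ B := by
      intro A B hA hB h T hT
      have : c T ∈ B.image c := h ▸ Finset.mem_image_of_mem c hT
      obtain ⟨T', hT', hcT⟩ := Finset.mem_image.mp this
      have e1 := hc T (hA.2.1 T hT)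
      have e2 := hc T' (hB.2.1 T' hT')
      have : T = T' := by rw [e1, e2, hcT]
      exact this ▸ hT'
    intro A hA B hB h
    exact Finset.Subset.antisymm (fun T hT => key A B hA hB h T hT)
      (fun T hT => key B A hB hA h.symm T hT)
  · rintro σ ⟨𝒮, h𝒮, rfl⟩
    obtain ⟨hne, hmax, τ, hτ⟩ := h𝒮
    obtain ⟨T0, hT0⟩ := hne
    have hτmax : IsMaximalSimplex K τ := by
      have := (hmax T0 hT0).1.2.1 τ (hτ T0 hT0)
      exact this
    refine hK.2 τ hτmax.1 _ ?_ ?_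
    · intro x hx
      obtain ⟨T, hT, rfl⟩ := Finset.mem_image.mp hx
      have e := hc T (hmax T hT)
      have : τ ∈ maxAt K hfin (c T) := e ▸ hτ T hT
      exact (mem_maxAt.mp this).2
    · exact ⟨c T0, Finset.mem_image_of_mem c hT0⟩

/-- The number of simplices of `N²(K)` is at most that of `K`, with strict
inequality whenever `K` is not minimal. -/
theorem nerve_sq_card_le {V : Type*} [DecidableEq V]
    (K : Set (Finset V)) (hK : IsComplex K) (hfin : K.Finite) :
    (nerve (nerve K)).ncard ≤ K.ncard ∧
      (¬ MinimalComplex K → (nerve (nerve K)).ncard < K.ncard) := by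
  classical
  rcases isEmpty_or_nonempty V with hV | hV
  · have hKe : K = ∅ := by
      ext σ
      simp only [Set.mem_empty_iff_false, iff_false]
      intro hσ
      obtain ⟨x, _⟩ := hK.1 σ hσ
      exact (IsEmpty.false x)
    have hmin : MinimalComplex K := by
      intro v v' hd
      exact (IsEmpty.false v)
    constructor
    · have hne : nerve (nerve K) = ∅ := by
        ext S
        simp only [Set.mem_empty_iff_false, iff_false]
        rintro ⟨⟨T, hT⟩, hmax, -⟩
        obtain ⟨⟨T0, hT0⟩, hmax0, -⟩ := (hmax T hT).1
        have := (hmax0 T0 hT0).1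
        rw [hKe] at this
        exact this
      simp [hne]
    · intro h; exact absurd hmin h
  · -- nontrivial case
    have hex : ∀ T, IsMaximalSimplex (nerve K) T → ∃ x, T = maxAt K hfin x :=
      fun T hT => max_nerve_rep hfin hT
    set c0 : Finset (Finset V) → V := fun T =>
      if h : ∃ x, T = maxAt K hfin x then h.choose else Classical.arbitrary V with hc0def
    have hc0 : ∀ T, IsMaximalSimplex (nerve K) T → T = maxAt K hfin (c0 T) := by
      intro T hT
      have h := hex T hT
      simp only [hc0def, dif_pos h]
      exact h.choose_spec
    obtain ⟨hinj, hsub⟩ := inj_lemma K hK hfin c0 hc0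
    constructor
    · calc (nerve (nerve K)).ncard
          = ((fun 𝒮 : Finset (Finset (Finset V)) => 𝒮.image c0) '' (nerve (nerve K))).ncard :=
            (Set.ncard_image_of_injOn hinj).symm
        _ ≤ K.ncard := Set.ncard_le_ncard hsub hfin
    · intro hnm
      obtain ⟨v, v', hne, hlk, hcone⟩ : ∃ v v', Dominated K v v' := by
        by_contra h
        push_neg at h
        exact hnm h
      -- every maximal simplex containing v contains v'
      have hdom : ∀ σ, IsMaximalSimplex K σ → v ∈ σ → v' ∈ σ := by
        rintro σ ⟨hσK, hσmax⟩ hvσ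
        by_cases hτ : (σ.erase v).Nonempty
        · have hτK : σ.erase v ∈ K := hK.2 σ hσK _ (Finset.erase_subset v σ) hτ
          have h1 : σ.erase v ∪ {v} = σ := by
            rw [Finset.union_comm, ← Finset.insert_eq, Finset.insert_erase hvσ]
          have hlink : σ.erase v ∈ link K v :=
            ⟨hτK, Finset.notMem_erase v σ, by rw [h1]; exact hσK⟩
          obtain ⟨hK2, -, hK3⟩ := hcone _ hlink
          have hsubs : σ.erase v ∪ {v} ⊆ σ.erase v ∪ {v'} ∪ {v} :=
            Finset.union_subset_union_left Finset.subset_union_left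
          rw [h1] at hsubs
          have := hσmax _ hK3 hsubs
          rw [this]
          simp
        · have hσv : σ = {v} := by
            rw [Finset.not_nonempty_iff_eq_empty, Finset.erase_eq_empty_iff] at hτ
            rcases hτ with h | h
            · exact absurd (h ▸ hvσ) (Finset.notMem_empty v)
            · exact h
          obtain ⟨-, -, hvv'⟩ := hlk
          have hsubs : σ ⊆ ({v'} : Finset V) ∪ {v} := by
            rw [hσv]; simp
          have := hσmax _ hvv' hsubs
          rw [this]
          simp
      have hmono : maxAt K hfin v ⊆ maxAt K hfin v' := by
        intro σ hσ
        obtain ⟨hm, hv⟩ := mem_maxAt.mp hσ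
        exact mem_maxAt.mpr ⟨hm, hdom σ hm hv⟩
      set c1 : Finset (Finset V) → V := fun T => if c0 T = v then v' else c0 T with hc1def
      have hc1 : ∀ T, IsMaximalSimplex (nerve K) T → T = maxAt K hfin (c1 T) := by
        intro T hT
        by_cases h : c0 T = v
        · simp only [hc1def, if_pos h]
          have e := hc0 T hT
          rw [h] at e
          exact max_nerve_eq hT (e ▸ hmono)
        · simp only [hc1def, if_neg h]
          exact hc0 T hT
      have hc1v : ∀ T, c1 T ≠ v := by
        intro T
        by_cases h : c0 T = v <;> simp [hc1def, h, hne]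
      obtain ⟨hinj1, hsub1⟩ := inj_lemma K hK hfin c1 hc1
      have hvK : ({v} : Finset V) ∈ K := by
        obtain ⟨-, -, hvv'⟩ := hlk
        exact hK.2 _ hvv' {v} (by simp) ⟨v, Finset.mem_singleton_self v⟩
      have hnotim : ({v} : Finset V) ∉
          (fun 𝒮 : Finset (Finset (Finset V)) => 𝒮.image c1) '' (nerve (nerve K)) := by
        rintro ⟨𝒮, h𝒮, himg⟩
        obtain ⟨T0, hT0⟩ := h𝒮.1
        have : c1 T0 ∈ 𝒮.image c1 := Finset.mem_image_of_mem c1 hT0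
        have himg' : Finset.image c1 𝒮 = {v} := himg
        rw [himg'] at this
        exact hc1v T0 (Finset.mem_singleton.mp this)
      have hss : (fun 𝒮 : Finset (Finset (Finset V)) => 𝒮.image c1) '' (nerve (nerve K)) ⊂ K :=
        ⟨hsub1, fun h => hnotim (h hvK)⟩
      calc (nerve (nerve K)).ncard
          = ((fun 𝒮 : Finset (Finset (Finset V)) => 𝒮.image c1) '' (nerve (nerve K))).ncard :=
            (Set.ncard_image_of_injOn hinj1).symm
        _ < K.ncard := Set.ncard_lt_ncard hss hfin
end
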